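/- Let R be a ring and a, b, c ∈ R with aba = aca. If 1 + ac has a Hirano inverse, then 1 + ba has a Hirano inverse. -/

import Mathlib

def IsHiranoInverse {R : Type*} [Ring R] (a b : R) : Prop :=
  IsNilpotent (a ^ 2 - a * b) ∧ a * b = b * a ∧ b = b * a * b

open Finset in
/-- In a commutative ring, if `u - u*u` is nilpotent, then there is an idempotent `e`
with `u - e` nilpotent, together with a "corner inverse" `v` of `u`. -/
lemma aux_comm_idem {S : Type*} [CommRing S] (u : S) (h : IsNilpotent (u - u * u)) :
    ∃ e v : S, e * e = e ∧ IsNilpotent (u - e) ∧ u * v = e ∧ e * v = v := by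
  obtain ⟨k, hk⟩ := h
  have hk1 : (u - u * u) ^ (k + 1) = 0 := by rw [pow_succ, hk, zero_mul]
  have h0' : u ^ (k + 1) * (1 - u) ^ (k + 1) = 0 := by
    rw [← mul_pow]
    calc (u * (1 - u)) ^ (k + 1) = (u - u * u) ^ (k + 1) := by ring_nf
      _ = 0 := hk1
  set s : S := ∑ i ∈ range (k + 1), (1 - u) ^ i with hs
  have hgs : s * ((1 - u) - 1) = (1 - u) ^ (k + 1) - 1 := geom_sum_mul _ (k + 1)
  have hq : u * s = 1 - (1 - u) ^ (k + 1) := by linear_combination -hgs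
  set e : S := (u * s) ^ (k + 1) with he
  set G : S := ∑ i ∈ range (k + 1), (u * s) ^ i with hG
  have hgq : G * ((u * s) - 1) = (u * s) ^ (k + 1) - 1 := geom_sum_mul _ (k + 1)
  have hidem : e * e = e := by
    rw [he]
    linear_combination (-((u*s)^(k+1))) * hgq + ((u*s)^(k+1) * G) * hq - (s^(k+1) * G) * h0'
  have hsplit : u - e = (u - u * u) * (G * (1 - u) ^ k) - (u - u * u) * (s * (u * s) ^ k) := by
    rw [he]
    linear_combination u * hgq - (u * G) * hq
  have hbase : IsNilpotent (u - u * u) := ⟨k, hk⟩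
  have hnil : IsNilpotent (u - e) := by
    rw [hsplit]
    exact Commute.isNilpotent_sub (Commute.all _ _)
      ((Commute.all _ _).isNilpotent_mul_right hbase)
      ((Commute.all _ _).isNilpotent_mul_right hbase)
  have hne : IsNilpotent (u * e - e) := by
    have hue : u * e - e = (u - e) * e := by linear_combination hidem
    rw [hue]
    exact (Commute.all _ _).isNilpotent_mul_right hnil
  obtain ⟨w, hw⟩ := IsUnit.exists_left_inv (hne.isUnit_one_add)
  refine ⟨e, w * e, hidem, hnil, ?_, ?_⟩
  · linear_combination e * hw + (w - u * w) * hidem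
  · linear_combination w * hidem

/-- If `x - x^3` is nilpotent, then `x` has a Hirano inverse. -/
lemma hirano_of_nilpotent {R : Type*} [Ring R] (x : R) (h : IsNilpotent (x - x ^ 3)) :
    ∃ y, IsHiranoInverse x y := by
  have hcomm : ∀ p ∈ ({x} : Set R), ∀ q ∈ ({x} : Set R), p * q = q * p := by
    rintro p rfl q rfl; rfl
  letI : CommRing (Algebra.adjoin ℤ ({x} : Set R)) := Algebra.adjoinCommRingOfComm ℤ hcomm
  have hxT : x ∈ Algebra.adjoin ℤ ({x} : Set R) := Algebra.subset_adjoin rfl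
  set X : Algebra.adjoin ℤ ({x} : Set R) := ⟨x, hxT⟩ with hX
  set f : Algebra.adjoin ℤ ({x} : Set R) →+* R :=
    (Subalgebra.val (Algebra.adjoin ℤ ({x} : Set R))).toRingHom with hf
  have finj : Function.Injective f := Subtype.coe_injective
  have fX : f X = x := rfl
  have hun : IsNilpotent (X * X - (X * X) * (X * X)) := by
    obtain ⟨k, hk⟩ := h
    refine ⟨k, finj ?_⟩
    rw [map_pow, map_sub, map_mul, map_mul, map_mul, fX, map_zero]
    have hc : (x * x - x * x * (x * x)) = (x - x ^ 3) * x := by noncomm_ring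
    have hcm : ((x - x ^ 3) * x) ^ k = (x - x ^ 3) ^ k * x ^ k :=
      Commute.mul_pow (by show (x - x ^ 3) * x = x * (x - x ^ 3); noncomm_ring) k
    rw [hc, hcm, hk, zero_mul]
  obtain ⟨e, v, hidem, hnil, huv, hev⟩ := aux_comm_idem (X * X) hun
  have hEE : f e * f e = f e := by rw [← map_mul, hidem]
  have hxE : x * f e = f e * x := by
    have h1 := congrArg f (mul_comm X e)
    rw [map_mul, map_mul, fX] at h1
    exact h1
  have hxV : x * f v = f v * x := by
    have h1 := congrArg f (mul_comm X v)
    rw [map_mul, map_mul, fX] at h1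
    exact h1
  have hxxV : x * x * f v = f e := by
    have h1 := congrArg f huv
    rw [map_mul, map_mul, fX] at h1
    exact h1
  have hEV : f e * f v = f v := by
    have h1 := congrArg f hev
    rw [map_mul] at h1
    exact h1
  have hnilR : IsNilpotent (x * x - f e) := by
    have h1 := hnil.map f
    rw [map_sub, map_mul, fX] at h1
    exact h1
  have hyx : (x * f v) * x = f e := by
    rw [mul_assoc, ← hxV, ← mul_assoc]
    exact hxxV
  refine ⟨x * f v, ?_, ?_, ?_⟩
  · rw [show x ^ 2 - x * (x * f v) = x * x - x * x * f v from by noncomm_ring, hxxV]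
    exact hnilR
  · calc x * (x * f v) = x * x * f v := by rw [mul_assoc]
      _ = f e := hxxV
      _ = (x * f v) * x := hyx.symm
  · calc x * f v = x * (f e * f v) := by rw [hEV]
      _ = (x * f e) * f v := by rw [mul_assoc]
      _ = f e * x * f v := by rw [hxE]
      _ = f e * (x * f v) := by rw [mul_assoc]
      _ = ((x * f v) * x) * (x * f v) := by rw [hyx]

/-- If `x` has a Hirano inverse, then `x - x^3` is nilpotent. -/
lemma nilpotent_of_hirano {R : Type*} [Ring R] (x y : R) (h : IsHiranoInverse x y) :
    IsNilpotent (x - x ^ 3) := by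
  obtain ⟨hnil, hcomm, hy⟩ := h
  set e : R := x * y with he
  have cxy : Commute x y := hcomm
  have cxe : Commute x e := (Commute.refl x).mul_right cxy
  have hee : e * e = e := by
    calc e * e = x * (y * x * y) := by rw [he]; noncomm_ring
      _ = x * y := by rw [← hy]
      _ = e := rfl
  have hnil' : IsNilpotent (x * x - e) := by
    have h2 : x ^ 2 - e = x * x - e := by rw [pow_two]
    rwa [h2] at hnil
  have cxxe : Commute x (x * x - e) :=
    ((Commute.refl x).mul_right (Commute.refl x)).sub_right cxe
  have n1 : IsNilpotent (x * (x * x - e)) := cxxe.isNilpotent_mul_left hnil'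
  have c1 : Commute (x * x - e) e := (cxe.mul_left cxe).sub_left (Commute.refl e)
  have ce1 : Commute (x * x - e) (1 - e) := (Commute.one_right _).sub_right c1
  have cx1e : Commute x (1 - e) := (Commute.one_right x).sub_right cxe
  have n2 : IsNilpotent (x * (1 - e)) := by
    have h1 : (1 - e) * x = x * (1 - e) := cx1e.symm.eq
    have hsq : (x * (1 - e)) * (x * (1 - e)) = (x * x - e) * (1 - e) := by
      calc (x * (1 - e)) * (x * (1 - e)) = x * ((1 - e) * x) * (1 - e) := by noncomm_ring
        _ = x * (x * (1 - e)) * (1 - e) := by rw [h1]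
        _ = (x * x) * ((1 - e) * (1 - e)) := by noncomm_ring
        _ = (x * x) * (1 - e) := by
            congr 1
            calc (1 - e) * (1 - e) = 1 - e - e + e * e := by noncomm_ring
              _ = 1 - e := by rw [hee]; abel
        _ = (x * x - e) * (1 - e) := by
            rw [sub_mul, mul_sub, mul_one, mul_sub e, mul_one, hee]
            noncomm_ring
    have hsqnil : IsNilpotent ((x * (1 - e)) * (x * (1 - e))) := by
      rw [hsq]
      exact Commute.isNilpotent_mul_right ce1 hnil'
    obtain ⟨j, hj⟩ := hsqnil
    refine ⟨2 * j, ?_⟩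
    rw [pow_mul, pow_two, hj]
  have c12 : Commute (x * (1 - e)) (x * (x * x - e)) := by
    have A : Commute (x * (1 - e)) x := (Commute.refl x).mul_left cx1e.symm
    have B : Commute (x * (1 - e)) (x * x - e) := cxxe.mul_left ce1.symm
    exact A.mul_right B
  have hfin : x - x ^ 3 = x * (1 - e) - x * (x * x - e) := by noncomm_ring
  rw [hfin]
  exact Commute.isNilpotent_sub c12 n2 n1

theorem stmt17 {R : Type*} [Ring R] (a b c : R) (h : a * b * a = a * c * a)
    (hac : ∃ y, IsHiranoInverse (1 + a * c) y) :
    ∃ y, IsHiranoInverse (1 + b * a) y := by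
  obtain ⟨y, hy⟩ := hac
  have hα : IsNilpotent ((1 + a * c) - (1 + a * c) ^ 3) := nilpotent_of_hirano _ y hy
  obtain ⟨t, ht⟩ : ∃ t', a * c = t' := ⟨_, rfl⟩
  obtain ⟨w, hw⟩ : ∃ w', b * a = w' := ⟨_, rfl⟩
  rw [ht] at hα
  rw [hw]
  have h1 : a * w = t * a := by
    rw [← hw, ← mul_assoc, h, mul_assoc, ← mul_assoc, ht]
  -- key identity: a * w^k = t^k * a
  have keyA : ∀ k : ℕ, a * w ^ k = t ^ k * a := by
    intro k
    induction k with
    | zero => simp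
    | succ k ih =>
      calc a * w ^ (k + 1) = a * (w * w ^ k) := by rw [pow_succ']
        _ = (a * w) * w ^ k := by rw [mul_assoc]
        _ = t * (a * w ^ k) := by rw [h1, mul_assoc]
        _ = t * (t ^ k * a) := by rw [ih]
        _ = t ^ (k + 1) * a := by rw [pow_succ', mul_assoc]
  have keyB : a * (2 + 3 * w + w * w) = (2 + 3 * t + t * t) * a := by
    have expand : a * (2 + 3 * w + w * w) = 2 * a + 3 * (a * w) + (a * w) * w := by
      noncomm_ring
    rw [expand, h1, mul_assoc t a w, h1]
    noncomm_ring
  have keyC : ∀ k : ℕ, a * (2 + 3 * w + w * w) ^ k = (2 + 3 * t + t * t) ^ k * a := by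
    intro k
    induction k with
    | zero => simp
    | succ k ih =>
      calc a * (2 + 3 * w + w * w) ^ (k + 1)
          = a * ((2 + 3 * w + w * w) * (2 + 3 * w + w * w) ^ k) := by rw [pow_succ']
        _ = (a * (2 + 3 * w + w * w)) * (2 + 3 * w + w * w) ^ k := by rw [mul_assoc]
        _ = (2 + 3 * t + t * t) * (a * (2 + 3 * w + w * w) ^ k) := by rw [keyB, mul_assoc]
        _ = (2 + 3 * t + t * t) * ((2 + 3 * t + t * t) ^ k * a) := by rw [ih]
        _ = (2 + 3 * t + t * t) ^ (k + 1) * a := by rw [pow_succ', mul_assoc]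
  have hαn : IsNilpotent (t * (2 + 3 * t + t * t)) := by
    have h2 := hα.neg
    have heq : -((1 + t) - (1 + t) ^ 3) = t * (2 + 3 * t + t * t) := by noncomm_ring
    rwa [heq] at h2
  obtain ⟨k, hk⟩ := hαn
  have ctg : Commute t (2 + 3 * t + t * t) := by
    show t * (2 + 3 * t + t * t) = (2 + 3 * t + t * t) * t
    noncomm_ring
  have cwg : Commute w (2 + 3 * w + w * w) := by
    show w * (2 + 3 * w + w * w) = (2 + 3 * w + w * w) * w
    noncomm_ring
  have hw1 : w ^ (k + 1) = b * (t ^ k * a) := by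
    rw [pow_succ']
    nth_rewrite 1 [← hw]
    rw [mul_assoc, keyA k]
  have hM : (w * (2 + 3 * w + w * w)) ^ (k + 1) = 0 := by
    calc (w * (2 + 3 * w + w * w)) ^ (k + 1)
        = w ^ (k + 1) * (2 + 3 * w + w * w) ^ (k + 1) := cwg.mul_pow (k + 1)
      _ = (b * (t ^ k * a)) * (2 + 3 * w + w * w) ^ (k + 1) := by rw [hw1]
      _ = b * (t ^ k * (a * (2 + 3 * w + w * w) ^ (k + 1))) := by
          rw [mul_assoc, mul_assoc]
      _ = b * (t ^ k * ((2 + 3 * t + t * t) ^ (k + 1) * a)) := by rw [keyC (k + 1)]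
      _ = b * (t ^ k * (((2 + 3 * t + t * t) ^ k * (2 + 3 * t + t * t)) * a)) := by
          rw [pow_succ]
      _ = b * (((t ^ k * (2 + 3 * t + t * t) ^ k) * (2 + 3 * t + t * t)) * a) := by
          rw [← mul_assoc (t ^ k) _ a, ← mul_assoc (t ^ k)]
      _ = b * (((t * (2 + 3 * t + t * t)) ^ k * (2 + 3 * t + t * t)) * a) := by
          rw [ctg.mul_pow]
      _ = 0 := by rw [hk, zero_mul, zero_mul, mul_zero]
  have hβn : IsNilpotent ((1 + w) - (1 + w) ^ 3) := by
    have hMnil : IsNilpotent (w * (2 + 3 * w + w * w)) := ⟨k + 1, hM⟩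
    have h2 := hMnil.neg
    have heq : -(w * (2 + 3 * w + w * w)) = (1 + w) - (1 + w) ^ 3 := by noncomm_ring
    rwa [heq] at h2
  exact hirano_of_nilpotent _ hβn
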